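/- arXiv:1210.7315 — 2 statements merged into one kernel-verified Lean document; each statement's English description precedes it below -/
import Mathlib

section
/- Every linear forest in K_n (a subgraph all of whose connected components are paths) with n ≥ 3 vertices available is contained in some Hamiltonian cycle of K_n. -/
open SimpleGraph

/-- In a path starting at `y`, there is at most one vertex `a` with `s(y,a)` among the edges. -/
lemma uniq_nbr {V} {F : SimpleGraph V} {y x a b : V} {p : F.Walk y x} (hp : p.IsPath)
    (ha : s(y,a) ∈ p.edges) (hb : s(y,b) ∈ p.edges) : a = b := by
  cases p with
  | nil => simp at ha
  | @cons _ c _ h q =>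
    rw [Walk.edges_cons, List.mem_cons] at ha hb
    rw [Walk.cons_isPath_iff] at hp
    have key : ∀ d, s(y,d) ∈ q.edges → False := fun d hd =>
      hp.2 (Walk.fst_mem_support_of_mem_edges q hd)
    rcases ha with ha | ha
    · rcases hb with hb | hb
      · rw [Sym2.congr_right] at ha hb; rw [ha, hb]
      · exact absurd hb (key b)
    · exact absurd ha (key a)

/-- Every vertex of a finite acyclic graph reaches a vertex of degree at most one. -/
lemma exists_leaf {n : ℕ} {F : SimpleGraph (Fin n)} (hA : F.IsAcyclic) (x : Fin n) :
    ∃ y, F.Reachable x y ∧ (F.neighborSet y).ncard ≤ 1 := by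
  set S : Set ℕ := {k | ∃ (y : Fin n) (p : F.Walk y x), p.IsPath ∧ p.length = k} with hS
  have hS0 : (0 : ℕ) ∈ S := ⟨x, Walk.nil, Walk.IsPath.nil, rfl⟩
  have hbdd : BddAbove S := by
    refine ⟨n, fun k hk => ?_⟩
    obtain ⟨y, p, hp, rfl⟩ := hk
    have := hp.length_lt
    simpa [Fintype.card_fin] using this.le
  have hmem := Nat.sSup_mem ⟨0, hS0⟩ hbdd
  obtain ⟨y, p, hp, hlen⟩ := hmem
  refine ⟨y, ⟨p.reverse⟩, ?_⟩
  rw [Set.ncard_le_one_iff]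
  have claim : ∀ w, F.Adj y w → s(y,w) ∈ p.edges := by
    intro w hw
    by_cases hws : w ∈ p.support
    · by_contra hne
      have hq : (p.takeUntil w hws).reverse.IsPath := (hp.takeUntil hws).reverse
      have hcyc : (Walk.cons hw (p.takeUntil w hws).reverse).IsCycle := by
        refine (Walk.cons_isCycle_iff _ hw).2 ⟨hq, fun hc => hne ?_⟩
        rw [Walk.edges_reverse, List.mem_reverse] at hc
        exact Walk.edges_takeUntil_subset _ hws hc
      exact hA _ hcyc
    · exfalso
      have hp' : (Walk.cons hw.symm p).IsPath := (Walk.cons_isPath_iff _ _).2 ⟨hp, hws⟩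
      have hmem' : p.length + 1 ∈ S := ⟨w, Walk.cons hw.symm p, hp', by simp⟩
      have hle := le_csSup hbdd hmem'
      omega
  exact fun {a} {b} ha hb => uniq_nbr hp (claim a ha) (claim b hb)

/-- Adding an edge between two vertices in different components keeps the graph acyclic. -/
lemma acyclic_sup_edge {n : ℕ} {F : SimpleGraph (Fin n)} (hA : F.IsAcyclic) {u v : Fin n}
    (hne : u ≠ v) (hnr : ¬F.Reachable u v) : (F ⊔ edge u v).IsAcyclic := by
  intro a c hc
  by_cases he : s(u,v) ∈ c.edges
  · have h2 : ((F ⊔ edge u v) \ fromEdgeSet {s(u,v)}).Reachable u v :=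
      (adj_and_reachable_delete_edges_iff_exists_cycle.2 ⟨a, c, hc, he⟩).2
    refine hnr (h2.mono ?_)
    intro x y hxy
    rw [sdiff_adj] at hxy
    obtain ⟨h1, h2'⟩ := hxy
    rcases (sup_adj _ _ _ _).1 h1 with h | h
    · exact h
    · exfalso
      rw [edge_adj] at h
      refine h2' ((fromEdgeSet_adj _).2 ⟨?_, h.2⟩)
      rcases h.1 with ⟨rfl, rfl⟩ | ⟨rfl, rfl⟩
      · exact rfl
      · exact Sym2.eq_swap
  · have hsub : ∀ e ∈ c.edges, e ∈ F.edgeSet := by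
      intro e hec
      have hmem := Walk.edges_subset_edgeSet c hec
      rw [edgeSet_sup, edge_edgeSet_of_ne hne] at hmem
      rcases hmem with h | h
      · exact h
      · exact absurd (h ▸ hec) he
    exact hA _ (hc.transfer hsub)

lemma edge_comm' {V} (u v : V) : SimpleGraph.edge u v = SimpleGraph.edge v u := by
  ext x y; rw [edge_adj, edge_adj]; tauto

lemma nbr_sup_edge_left {V} (F : SimpleGraph V) {u v : V} (hne : u ≠ v) :
    (F ⊔ edge u v).neighborSet u = insert v (F.neighborSet u) := by
  ext a
  simp only [mem_neighborSet, sup_adj, edge_adj, Set.mem_insert_iff]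
  constructor
  · rintro (h | ⟨h1, hne2⟩)
    · exact Or.inr h
    · rcases h1 with ⟨-, rfl⟩ | ⟨rfl, rfl⟩
      · exact Or.inl rfl
      · exact absurd rfl hne
  · rintro (rfl | h)
    · exact Or.inr ⟨by simp, hne⟩
    · exact Or.inl h

lemma nbr_sup_edge_other {V} (F : SimpleGraph V) {u v w : V} (hwu : w ≠ u) (hwv : w ≠ v) :
    (F ⊔ edge u v).neighborSet w = F.neighborSet w := by
  ext a
  simp only [mem_neighborSet, sup_adj, edge_adj]
  constructor
  · rintro (h | ⟨⟨rfl, rfl⟩ | ⟨rfl, rfl⟩, hne2⟩)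
    · exact h
    · exact absurd rfl hwu
    · exact absurd rfl hwv
  · exact Or.inl

/-- The connected case: a connected linear forest is a Hamiltonian path; joining its
two endpoints yields a Hamiltonian cycle. -/
lemma conn_case {n : ℕ} (hn : 3 ≤ n) {F : SimpleGraph (Fin n)} (hA : F.IsAcyclic)
    (hDeg : ∀ v, (F.neighborSet v).ncard ≤ 2) (hc : F.Connected) :
    ∃ G : SimpleGraph (Fin n), (G.Connected ∧ ∀ v, (G.neighborSet v).ncard = 2) ∧ F ≤ G := by
  classical
  haveI : DecidableRel F.Adj := Classical.decRel _
  have hdeq : ∀ v, (F.neighborSet v).ncard = F.degree v := by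
    intro v
    rw [Set.ncard_eq_toFinset_card', Set.toFinset_card, card_neighborSet_eq_degree]
  have htree : F.IsTree := ⟨hc, hA⟩
  have hcard : F.edgeFinset.card = n - 1 := by
    have h := htree.card_edgeFinset
    rw [Fintype.card_fin] at h
    omega
  have hsum : ∑ v, F.degree v = 2 * (n - 1) := by
    rw [F.sum_degrees_eq_twice_card_edges, hcard]
  have hub : ∀ v, F.degree v ≤ 2 := fun v => (hdeq v) ▸ hDeg v
  haveI : Nontrivial (Fin n) := Fin.nontrivial_iff_two_le.mpr (by omega)
  have hlb : ∀ v, 1 ≤ F.degree v := by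
    intro v
    obtain ⟨w, hwv⟩ := exists_ne v
    obtain ⟨p⟩ := hc.preconnected v w
    have hpos : 0 < F.degree v := by
      cases p with
      | nil => exact absurd rfl hwv
      | cons h q =>
        rw [← hdeq, Set.ncard_pos]
        exact ⟨_, h⟩
    omega
  set A := Finset.univ.filter (fun v => F.degree v = 1) with hAdef
  have hcardA : A.card = 2 := by
    have hsplit := Finset.sum_filter_add_sum_filter_not Finset.univ
      (fun v => F.degree v = 1) (fun v => F.degree v)
    have h1 : ∑ v ∈ A, F.degree v = A.card := by
      rw [Finset.sum_congr rfl (fun v hv => (Finset.mem_filter.1 hv).2)]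
      simp
      rfl
    have h2 : ∑ v ∈ Finset.univ.filter (fun v => ¬ F.degree v = 1), F.degree v
        = 2 * (Finset.univ.filter (fun v => ¬ F.degree v = 1)).card := by
      rw [Finset.sum_congr rfl (fun v hv => ?_)]
      · rw [Finset.sum_const, smul_eq_mul, mul_comm]
      · have h3 := hub v
        have h4 := hlb v
        have h5 := (Finset.mem_filter.1 hv).2
        omega
    have hcards : A.card + (Finset.univ.filter (fun v => ¬ F.degree v = 1)).card = n := by
      rw [Finset.card_filter_add_card_filter_not]
      simp
    rw [h1, h2, hsum] at hsplit
    omega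
  obtain ⟨u, v, huv, hA2⟩ := Finset.card_eq_two.1 hcardA
  have hu1 : F.degree u = 1 := by
    have : u ∈ A := hA2 ▸ Finset.mem_insert_self _ _
    exact (Finset.mem_filter.1 this).2
  have hv1 : F.degree v = 1 := by
    have : v ∈ A := hA2 ▸ Finset.mem_insert_of_mem (Finset.mem_singleton_self _)
    exact (Finset.mem_filter.1 this).2
  have hdeg2 : ∀ w, w ≠ u → w ≠ v → F.degree w = 2 := by
    intro w hwu hwv
    have hwA : w ∉ A := by rw [hA2]; simp [hwu, hwv]
    rw [hAdef, Finset.mem_filter] at hwA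
    have h3 := hub w
    have h4 := hlb w
    simp only [Finset.mem_univ, true_and] at hwA
    omega
  have hnadj : ¬ F.Adj u v := by
    intro hadj
    have hNu : F.neighborSet u = {v} := by
      obtain ⟨a, ha⟩ := Set.ncard_eq_one.1 (by rw [hdeq, hu1])
      have : v ∈ F.neighborSet u := hadj
      rw [ha] at this ⊢
      rw [Set.mem_singleton_iff] at this
      rw [this]
    have hNv : F.neighborSet v = {u} := by
      obtain ⟨a, ha⟩ := Set.ncard_eq_one.1 (by rw [hdeq, hv1])
      have : u ∈ F.neighborSet v := hadj.symm
      rw [ha] at this ⊢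
      rw [Set.mem_singleton_iff] at this
      rw [this]
    obtain ⟨w, hwu, hwv⟩ : ∃ w : Fin n, w ≠ u ∧ w ≠ v := by
      by_contra hcon
      push_neg at hcon
      have hsub : (Finset.univ : Finset (Fin n)) ⊆ {u, v} := by
        intro w _
        by_cases h : w = u
        · simp [h]
        · simp [hcon w h]
      have hle := Finset.card_le_card hsub
      rw [Finset.card_univ, Fintype.card_fin] at hle
      have : ({u, v} : Finset (Fin n)).card ≤ 2 := Finset.card_insert_le _ _ |>.trans (by simp)
      omega
    obtain ⟨p⟩ := hc.preconnected u w
    obtain ⟨q, hq⟩ := p.toPath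
    cases q with
    | nil => exact hwu rfl
    | @cons _ b _ h r =>
      have hbv : b = v := by
        have hb : b ∈ F.neighborSet u := h
        rw [hNu, Set.mem_singleton_iff] at hb
        exact hb
      have hNb : F.neighborSet b = {u} := by rw [hbv, hNv]
      have hwb : w ≠ b := by rw [hbv]; exact hwv
      cases r with
      | nil => exact hwb rfl
      | @cons _ c _ h' r' =>
        have hcu : c = u := by
          have hcm : c ∈ F.neighborSet b := h'
          rw [hNb, Set.mem_singleton_iff] at hcm
          exact hcm
        subst hcu
        rw [Walk.cons_isPath_iff] at hq
        exact hq.2 (by rw [Walk.support_cons]; exact List.mem_cons_of_mem _ r'.start_mem_support)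
  refine ⟨F ⊔ edge u v, ⟨hc.mono le_sup_left, ?_⟩, le_sup_left⟩
  intro w
  by_cases hwu : w = u
  · rw [hwu]
    have hvmem : v ∉ F.neighborSet u := fun h => hnadj h
    rw [nbr_sup_edge_left F huv,
      Set.ncard_insert_of_notMem hvmem (Set.toFinite _), hdeq, hu1]
  by_cases hwv : w = v
  · rw [hwv]
    have humem : u ∉ F.neighborSet v := fun h => hnadj (SimpleGraph.Adj.symm h)
    rw [edge_comm', nbr_sup_edge_left F (Ne.symm huv),
      Set.ncard_insert_of_notMem humem (Set.toFinite _), hdeq, hv1]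
  · rw [nbr_sup_edge_other F hwu hwv, hdeq, hdeg2 w hwu hwv]

/-- A Hamiltonian cycle of `K_n`, viewed as a (sub)graph on the vertex set `Fin n`:
a connected, 2-regular simple graph. -/
def IsHamCycle {n : ℕ} (G : SimpleGraph (Fin n)) : Prop :=
  G.Connected ∧ ∀ v : Fin n, (G.neighborSet v).ncard = 2

/-- Every linear forest in `K_n` (an acyclic subgraph with all degrees `≤ 2`),
`n ≥ 3`, is contained in some Hamiltonian cycle. -/
theorem linearForest_extends_to_hamCycle (n : ℕ) (hn : 3 ≤ n)
    (F : SimpleGraph (Fin n)) (hAcyclic : F.IsAcyclic)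
    (hDeg : ∀ v : Fin n, (F.neighborSet v).ncard ≤ 2) :
    ∃ G : SimpleGraph (Fin n), IsHamCycle G ∧ F ≤ G := by
  classical
  suffices H : ∀ (k : ℕ) (F : SimpleGraph (Fin n)), F.IsAcyclic →
      (∀ v, (F.neighborSet v).ncard ≤ 2) → (Fᶜ.edgeSet.ncard ≤ k) →
      ∃ G, IsHamCycle G ∧ F ≤ G by
    exact H _ F hAcyclic hDeg le_rfl
  intro k
  induction k with
  | zero =>
    intro F hA hD hk
    have hconn : F.Connected := by
      rw [connected_iff]
      refine ⟨fun x y => ?_, ⟨⟨0, by omega⟩⟩⟩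
      by_cases hxy : x = y
      · rw [hxy]
      · have hadj : F.Adj x y := by
          by_contra hnadj
          have hmem : s(x,y) ∈ Fᶜ.edgeSet := by
            rw [mem_edgeSet, compl_adj]
            exact ⟨hxy, hnadj⟩
          have h0 : Fᶜ.edgeSet.ncard = 0 := Nat.le_zero.1 hk
          rw [Set.ncard_eq_zero (Set.toFinite _)] at h0
          exact absurd (h0 ▸ hmem) (Set.notMem_empty _)
        exact hadj.reachable
    obtain ⟨G, hG, hFG⟩ := conn_case hn hA hD hconn
    exact ⟨G, hG, hFG⟩
  | succ k ih =>
    intro F hA hD hk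
    by_cases hconn : F.Connected
    · obtain ⟨G, hG, hFG⟩ := conn_case hn hA hD hconn
      exact ⟨G, hG, hFG⟩
    · haveI : Nonempty (Fin n) := ⟨⟨0, by omega⟩⟩
      obtain ⟨a, b, hab⟩ : ∃ a b : Fin n, ¬F.Reachable a b := by
        by_contra hcon
        push_neg at hcon
        exact hconn ⟨fun a b => hcon a b⟩
      obtain ⟨u, hu_r, hu_d⟩ := exists_leaf hA a
      obtain ⟨v, hv_r, hv_d⟩ := exists_leaf hA b
      have hnr : ¬ F.Reachable u v := fun h => hab (hu_r.trans (h.trans hv_r.symm))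
      have hne : u ≠ v := fun h => hnr (h ▸ Reachable.refl u)
      have hnadj : ¬ F.Adj u v := fun h => hnr h.reachable
      have hA' : (F ⊔ edge u v).IsAcyclic := acyclic_sup_edge hA hne hnr
      have hD' : ∀ w, ((F ⊔ edge u v).neighborSet w).ncard ≤ 2 := by
        intro w
        by_cases hwu : w = u
        · rw [hwu, nbr_sup_edge_left F hne]
          calc (insert v (F.neighborSet u)).ncard ≤ (F.neighborSet u).ncard + 1 :=
                Set.ncard_insert_le _ _
            _ ≤ 2 := by omega
        by_cases hwv : w = v
        · rw [hwv, edge_comm', nbr_sup_edge_left F (Ne.symm hne)]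
          calc (insert u (F.neighborSet v)).ncard ≤ (F.neighborSet v).ncard + 1 :=
                Set.ncard_insert_le _ _
            _ ≤ 2 := by omega
        · rw [nbr_sup_edge_other F hwu hwv]
          exact hD w
      have hlt : (F ⊔ edge u v)ᶜ.edgeSet.ncard ≤ k := by
        have hss : (F ⊔ edge u v)ᶜ.edgeSet ⊂ Fᶜ.edgeSet := by
          constructor
          · have hcle : (F ⊔ edge u v)ᶜ ≤ Fᶜ := by
              intro x y hxy
              rw [compl_adj] at hxy ⊢
              exact ⟨hxy.1, fun h => hxy.2 ((sup_adj _ _ _ _).2 (Or.inl h))⟩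
            exact edgeSet_mono hcle
          · intro hsub
            have h1 : s(u,v) ∈ Fᶜ.edgeSet := by
              rw [mem_edgeSet, compl_adj]
              exact ⟨hne, hnadj⟩
            have h2 := hsub h1
            rw [mem_edgeSet, compl_adj] at h2
            refine h2.2 ((sup_adj _ _ _ _).2 (Or.inr ?_))
            rw [edge_adj]
            exact ⟨Or.inl ⟨rfl, rfl⟩, hne⟩
        have := Set.ncard_lt_ncard hss (Set.toFinite _)
        omega
      obtain ⟨G, hG, hFG'⟩ := ih (F ⊔ edge u v) hA' hD' hlt
      exact ⟨G, hG, le_trans le_sup_left hFG'⟩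
end

section
/- For n ≥ 5 and any matching M of size k in K_n (with 2k ≤ n and k ≥ 1), the number of Hamiltonian cycles of K_n containing all edges of M equals 2^{k-1}·(n-k-1)!. -/
open Equiv Equiv.Perm Finset


set_option linter.unusedSectionVars false

/-- `σ` is a full cycle: no fixed points and a single cycle. -/
def FC {V : Type*} (σ : Equiv.Perm V) : Prop :=
  (∀ x, σ x ≠ x) ∧ ∀ x y, σ.SameCycle x y

section Basic

variable {V : Type*} [Fintype V] [DecidableEq V]

lemma FC.isCycle [Nonempty V] {σ : Perm V} (h : FC σ) : σ.IsCycle :=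
  ⟨Classical.arbitrary V, h.1 _, fun y _ => h.2 _ y⟩

lemma FC.no_two {σ : Perm V} (h : FC σ) (h3 : 3 ≤ Fintype.card V) (x : V) :
    σ (σ x) ≠ x := by
  intro hfix
  have hz : ∃ z : V, z ≠ x ∧ z ≠ σ x := by
    by_contra hc
    push_neg at hc
    have hsub : (Finset.univ : Finset V) ⊆ {x, σ x} := by
      intro z _
      rcases eq_or_ne z x with rfl | hzx
      · simp
      · simp [hc z hzx]
    have := Finset.card_le_card hsub
    have h2 : ({x, σ x} : Finset V).card ≤ 2 :=
      (Finset.card_insert_le _ _).trans (by simp)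
    simp only [Finset.card_univ] at this
    omega
  obtain ⟨z, hzx, hzsx⟩ := hz
  obtain ⟨i, hi⟩ := h.2 x z
  rcases Equiv.Perm.zpow_apply_eq_of_apply_apply_eq_self hfix i with h' | h' <;>
    rw [hi] at h'
  · exact hzx h'
  · exact hzsx h'

end Basic

section Contract

variable {V : Type*} [Fintype V] [DecidableEq V] {a b : V}

private lemma g_fix {σ : Perm V} (hab : σ a = b) : (swap a b * σ) a = a := by
  simp [Perm.mul_apply, hab]

private lemma mem_iff_aux {σ : Perm V} (hab : σ a = b) (x : V) :
    x ≠ a ↔ (swap a b * σ) x ≠ a := by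
  constructor
  · intro hx h
    exact hx ((swap a b * σ).injective (h.trans (g_fix hab).symm))
  · intro h hx
    subst hx; exact h (g_fix hab)

private lemma unswap (σ : Perm V) {u w : V} (h : (swap a b * σ) u = w) :
    σ u = swap a b w := by
  rw [← h, Perm.mul_apply, Equiv.swap_apply_self]

lemma contract_card (hab : a ≠ b) (h3 : 3 ≤ Fintype.card V)
    (Q : Perm V → Prop) (Q' : Perm {x : V // x ≠ a} → Prop)
    (hQ : ∀ (σ : Perm V), FC σ → σ a = b → ∀ (τ : Perm {x : V // x ≠ a}),
      (∀ x : {x : V // x ≠ a}, (τ x : V) = swap a b (σ x)) → (Q σ ↔ Q' τ)) :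
    Nat.card {σ : Perm V // FC σ ∧ σ a = b ∧ Q σ}
      = Nat.card {τ : Perm {x : V // x ≠ a} // FC τ ∧ Q' τ} := by
  classical
  haveI : Nonempty V := by
    rcases Fintype.card_pos_iff.mp (by omega : 0 < Fintype.card V) with h
    exact h
  have gne : ∀ (σ : Perm V), FC σ → σ a = b → ∀ (x : V), x ≠ a →
      (swap a b * σ) x ≠ x := by
    intro σ hσ hσa x hxa hfix
    have hσx : σ x = swap a b x := unswap σ hfix
    rcases eq_or_ne x b with hxb | hxb
    · rw [hxb, Equiv.swap_apply_right] at hσx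
      exact hσ.no_two h3 a (by rw [hσa, hσx])
    · rw [Equiv.swap_apply_of_ne_of_ne hxa hxb] at hσx
      exact hσ.1 x hσx
  have key : ∀ (σ : Perm V) (hσ : FC σ) (hσa : σ a = b),
      FC ((swap a b * σ).subtypePerm (p := fun x => x ≠ a) (fun x => (mem_iff_aux hσa x).symm)) := by
    intro σ hσ hσa
    constructor
    · rintro ⟨x, hx⟩ hfix
      exact gne σ hσ hσa x hx (congrArg Subtype.val hfix)
    · intro x y
      have hgc : (swap a b * σ).IsCycle := by
        have := hσ.isCycle.swap_mul (x := a) (hσ.1 a) (hσ.no_two h3 a)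
        rwa [hσa] at this
      exact Equiv.Perm.sameCycle_subtypePerm.mpr
        (hgc.exists_zpow_eq (gne σ hσ hσa x x.2) (gne σ hσ hσa y y.2))
  refine Nat.card_eq_of_bijective
    (fun s => ⟨(swap a b * s.1).subtypePerm (fun x => (mem_iff_aux s.2.2.1 x).symm),
      key s.1 s.2.1 s.2.2.1,
      (hQ s.1 s.2.1 s.2.2.1 _ (fun x => rfl)).mp s.2.2.2⟩) ⟨?_, ?_⟩
  · -- injective
    rintro ⟨σ₁, h₁⟩ ⟨σ₂, h₂⟩ heq
    have heq' := congrArg Subtype.val heq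
    simp only at heq'
    have e1 : Equiv.Perm.ofSubtype ((swap a b * σ₁).subtypePerm (p := fun x => x ≠ a) (fun x => (mem_iff_aux h₁.2.1 x).symm))
        = swap a b * σ₁ :=
      Equiv.Perm.ofSubtype_subtypePerm _ (fun x hx => by
        intro hxa; subst hxa; exact hx (g_fix h₁.2.1))
    have e2 : Equiv.Perm.ofSubtype ((swap a b * σ₂).subtypePerm (p := fun x => x ≠ a) (fun x => (mem_iff_aux h₂.2.1 x).symm))
        = swap a b * σ₂ :=
      Equiv.Perm.ofSubtype_subtypePerm _ (fun x hx => by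
        intro hxa; subst hxa; exact hx (g_fix h₂.2.1))
    have hgg : swap a b * σ₁ = swap a b * σ₂ := by rw [← e1, ← e2, heq']
    have : σ₁ = σ₂ := by
      have := congrArg (fun ρ => swap a b * ρ) hgg
      simpa [← mul_assoc] using this
    exact Subtype.ext this
  · -- surjective
    rintro ⟨τ, hτfc, hτQ⟩
    set σ : Perm V := swap a b * Equiv.Perm.ofSubtype τ with hσdef
    have hg : Equiv.Perm.ofSubtype τ a = a :=
      Equiv.Perm.ofSubtype_apply_of_not_mem τ (by simp)
    have hσa : σ a = b := by
      simp [hσdef, Perm.mul_apply, hg]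
    have hval : ∀ x : {x : V // x ≠ a}, Equiv.Perm.ofSubtype τ (x : V) = (τ x : V) :=
      fun x => Equiv.Perm.ofSubtype_apply_of_mem τ x.2
    have hvalne : ∀ x : {x : V // x ≠ a}, (τ x : V) ≠ (x : V) := by
      intro x h
      exact hτfc.1 x (Subtype.ext h)
    have hb_ne_a : b ≠ a := hab.symm
    have hσfc : FC σ := by
      constructor
      · intro x hfix
        rcases eq_or_ne x a with rfl | hxa
        · rw [hσa] at hfix; exact hab hfix.symm
        · have hua : Equiv.Perm.ofSubtype τ x ≠ a := by
            rw [hval ⟨x, hxa⟩]; exact (τ ⟨x, hxa⟩).2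
          rcases eq_or_ne (Equiv.Perm.ofSubtype τ x) b with hub | hub
          · have hx' : σ x = a := by
              simp [hσdef, Perm.mul_apply, hub]
            rw [hx'] at hfix; exact hxa hfix.symm
          · have hx' : σ x = Equiv.Perm.ofSubtype τ x := by
              simp only [hσdef, Perm.mul_apply]
              exact Equiv.swap_apply_of_ne_of_ne hua hub
            rw [hx'] at hfix
            exact hvalne ⟨x, hxa⟩ (by rw [← hval ⟨x, hxa⟩]; exact hfix)
      · have claim1 : ∀ i : ℕ, ∃ m : ℕ,
            (σ ^ m) b = ((Equiv.Perm.ofSubtype τ) ^ i) b := by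
          intro i
          induction i with
          | zero => exact ⟨0, by simp⟩
          | succ i ih =>
            obtain ⟨m, hm⟩ := ih
            set w : V := ((Equiv.Perm.ofSubtype τ) ^ i) b with hw
            have hwval : w = ((τ ^ i) ⟨b, hb_ne_a⟩ : V) := by
              rw [hw, ← map_pow,
                Equiv.Perm.ofSubtype_apply_of_mem (τ ^ i) hb_ne_a]
            have hwa : w ≠ a := by rw [hwval]; exact ((τ ^ i) ⟨b, hb_ne_a⟩).2
            set u : V := Equiv.Perm.ofSubtype τ w with hu
            have hgoal : ((Equiv.Perm.ofSubtype τ) ^ (i + 1)) b = u := by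
              rw [pow_succ', Perm.mul_apply, ← hw, hu]
            have hua : u ≠ a := by
              rw [hu, Equiv.Perm.ofSubtype_apply_of_mem τ hwa]
              exact (τ ⟨w, hwa⟩).2
            rcases eq_or_ne u b with hub | hub
            · refine ⟨m + 2, ?_⟩
              have h1 : σ ((σ ^ m) b) = a := by
                rw [hm]
                simp [hσdef, Perm.mul_apply, ← hu, hub]
              have hpow : σ ^ (m + 2) = σ * (σ * σ ^ m) := by
                rw [pow_succ', pow_succ']
              rw [hpow]
              show σ (σ ((σ ^ m) b)) = _
              rw [h1, hσa, hgoal, hub]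
            · refine ⟨m + 1, ?_⟩
              have h1 : σ ((σ ^ m) b) = u := by
                rw [hm]
                simp only [hσdef, Perm.mul_apply, ← hu]
                exact Equiv.swap_apply_of_ne_of_ne hua hub
              have hpow : σ ^ (m + 1) = σ * σ ^ m := by rw [pow_succ']
              rw [hpow]
              show σ ((σ ^ m) b) = _
              rw [h1, hgoal]
        have hreach : ∀ z : V, σ.SameCycle b z := by
          intro z
          rcases eq_or_ne z a with rfl | hza
          · have : σ.SameCycle z b := ⟨1, by simpa using hσa⟩
            exact this.symm
          · have hsc : τ.SameCycle ⟨b, hb_ne_a⟩ ⟨z, hza⟩ := hτfc.2 _ _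
            obtain ⟨i, _, hi⟩ := hsc.exists_pow_eq'
            have hz' : ((Equiv.Perm.ofSubtype τ) ^ i) b = z := by
              rw [← map_pow,
                Equiv.Perm.ofSubtype_apply_of_mem (τ ^ i) hb_ne_a, hi]
            obtain ⟨m, hm⟩ := claim1 i
            exact ⟨(m : ℤ), by rw [zpow_natCast, hm, hz']⟩
        exact fun x y => (hreach x).symm.trans (hreach y)
    refine ⟨⟨σ, hσfc, hσa, ?_⟩, ?_⟩
    · refine (hQ σ hσfc hσa τ ?_).mpr hτQ
      intro x
      have hx' : σ (x : V) = swap a b (τ x : V) := by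
        simp only [hσdef, Perm.mul_apply, hval x]
      rw [hx', Equiv.swap_apply_self]
    · refine Subtype.ext (Equiv.ext fun x => Subtype.ext ?_)
      show (swap a b * σ) (x : V) = (τ x : V)
      simp only [hσdef, ← mul_assoc, Equiv.swap_mul_self, one_mul]
      exact hval x

end Contract

section Anch

lemma anch_count (m : ℕ) : ∀ (V : Type) [DecidableEq V] [Fintype V],
    Fintype.card V = m → 2 ≤ m → ∀ a b : V, a ≠ b →
    Nat.card {σ : Perm V // FC σ ∧ σ a = b} = (m - 2).factorial := by
  induction m using Nat.strong_induction_on with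
  | _ m ih =>
    intro V _ _ hm h2 a b hab
    classical
    rcases eq_or_lt_of_le h2 with h2' | h3
    · -- base case : m = 2
      have hm2 : Fintype.card V = 2 := by omega
      have huniv : ({a, b} : Finset V) = Finset.univ := by
        apply Finset.eq_of_subset_of_card_le (Finset.subset_univ _)
        rw [Finset.card_univ, hm2, Finset.card_pair hab]
      have hall : ∀ x : V, x = a ∨ x = b := by
        intro x
        have : x ∈ ({a, b} : Finset V) := huniv ▸ Finset.mem_univ x
        simpa using this
      have h1 : Nat.card {σ : Perm V // FC σ ∧ σ a = b} = 1 := by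
        rw [Nat.card_eq_one_iff_unique]
        constructor
        · constructor
          rintro ⟨σ₁, hσ₁, ha₁⟩ ⟨σ₂, hσ₂, ha₂⟩
          have hb₁ : σ₁ b = a := by
            rcases hall (σ₁ b) with h | h
            · exact h
            · exact absurd h (hσ₁.1 b)
          have hb₂ : σ₂ b = a := by
            rcases hall (σ₂ b) with h | h
            · exact h
            · exact absurd h (hσ₂.1 b)
          refine Subtype.ext (Equiv.ext fun x => ?_)
          rcases hall x with rfl | rfl
          · rw [ha₁, ha₂]
          · rw [hb₁, hb₂]
        · refine ⟨⟨swap a b, ⟨?_, ?_⟩, Equiv.swap_apply_left a b⟩⟩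
          · intro x
            rcases hall x with rfl | rfl
            · rw [Equiv.swap_apply_left]; exact hab.symm
            · rw [Equiv.swap_apply_right]; exact hab
          · intro x y
            rcases hall x with rfl | rfl <;> rcases hall y with rfl | rfl
            · exact Equiv.Perm.SameCycle.refl _ _
            · exact ⟨1, by simp⟩
            · exact ⟨1, by simp⟩
            · exact Equiv.Perm.SameCycle.refl _ _
      rw [h1]
      have : m - 2 = 0 := by omega
      rw [this]; rfl
    · -- inductive step : 3 ≤ m
      have h3' : 3 ≤ Fintype.card V := by omega
      have step := contract_card hab h3' (fun _ => True) (fun _ => True)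
        (fun _ _ _ _ _ => Iff.rfl)
      have e1 : Nat.card {σ : Perm V // FC σ ∧ σ a = b}
          = Nat.card {σ : Perm V // FC σ ∧ σ a = b ∧ True} :=
        Nat.card_congr (Equiv.subtypeEquivRight (by tauto))
      rw [e1, step]
      -- now count all full cycles on V' := {x // x ≠ a}
      have hcardV' : Fintype.card {x : V // x ≠ a} = m - 1 := by
        rw [Fintype.card_subtype_compl, hm, Fintype.card_subtype_eq]
      haveI : Nonempty {x : V // x ≠ a} := by
        rw [← Fintype.card_pos_iff, hcardV']; omega
      obtain ⟨x₀⟩ := ‹Nonempty {x : V // x ≠ a}›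
      set V' := {x : V // x ≠ a}
      have e2 : Nat.card {τ : Perm V' // FC τ ∧ True}
          = Nat.card {τ : Perm V' // FC τ} :=
        Nat.card_congr (Equiv.subtypeEquivRight (by tauto))
      rw [e2]
      have hfilter : Nat.card {τ : Perm V' // FC τ}
          = (Finset.univ.filter (fun τ : Perm V' => FC τ)).card := by
        rw [Nat.card_eq_fintype_card, Fintype.card_subtype]
      have hfib := Finset.card_eq_sum_card_fiberwise
        (f := fun τ : Perm V' => τ x₀) (s := Finset.univ.filter (fun τ : Perm V' => FC τ))
        (t := Finset.univ.erase x₀)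
        (by
          intro τ hτ
          simp only [Finset.mem_coe, Finset.mem_filter] at hτ
          exact Finset.mem_erase.mpr ⟨hτ.2.1 x₀, Finset.mem_univ _⟩)
      rw [hfilter, hfib]
      have hterm : ∀ c ∈ Finset.univ.erase x₀,
          ((Finset.univ.filter (fun τ : Perm V' => FC τ)).filter
            (fun τ => τ x₀ = c)).card = (m - 3).factorial := by
        intro c hc
        have hcx : c ≠ x₀ := (Finset.mem_erase.mp hc).1
        have : ((Finset.univ.filter (fun τ : Perm V' => FC τ)).filter
            (fun τ => τ x₀ = c)).card = Nat.card {τ : Perm V' // FC τ ∧ τ x₀ = c} := by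
          rw [Nat.card_eq_fintype_card, Fintype.card_subtype, Finset.filter_filter]
        rw [this]
        have := ih (m - 1) (by omega) V' hcardV' (by omega) x₀ c hcx.symm
        rw [this]
        have harith : m - 1 - 2 = m - 3 := by omega
        rw [harith]
      rw [Finset.sum_congr rfl hterm, Finset.sum_const, smul_eq_mul]
      have hcarderase : (Finset.univ.erase x₀).card = m - 2 := by
        rw [Finset.card_erase_of_mem (Finset.mem_univ _), Finset.card_univ, hcardV']
        omega
      rw [hcarderase]
      have : m - 2 = (m - 3) + 1 := by omega
      rw [this, Nat.factorial_succ]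

end Anch

section DCount

/-- A good set of ordered pairs: a partial matching with chosen orientations. -/
def GoodP {V : Type*} (P : Finset (V × V)) : Prop :=
  (∀ p ∈ P, p.1 ≠ p.2) ∧
  ∀ p ∈ P, ∀ q ∈ P, p ≠ q → p.1 ≠ q.1 ∧ p.1 ≠ q.2 ∧ p.2 ≠ q.1 ∧ p.2 ≠ q.2

lemma Dcount (k : ℕ) : ∀ (V : Type) [DecidableEq V] [Fintype V]
    (a₀ b₀ : V) (P : Finset (V × V)),
    1 ≤ k → 2 * k ≤ Fintype.card V → (a₀, b₀) ∈ P → P.card = k → GoodP P →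
    Nat.card {σ : Perm V // FC σ ∧ σ a₀ = b₀ ∧ ∀ p ∈ P, σ p.1 = p.2 ∨ σ p.2 = p.1}
      = 2 ^ (k - 1) * (Fintype.card V - k - 1).factorial := by
  induction k with
  | zero => intro V _ _ a₀ b₀ P h1 _ _ _ _; omega
  | succ k ihk =>
    intro V _ _ a₀ b₀ P _ h2k hmem hcard hG
    classical
    rcases Nat.eq_zero_or_pos k with rfl | hk1
    · -- base case k + 1 = 1
      have hPsing : P = {(a₀, b₀)} := by
        obtain ⟨x, hx⟩ := Finset.card_eq_one.mp hcard
        rw [hx] at hmem ⊢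
        rw [Finset.mem_singleton.mp hmem]
      have hab : a₀ ≠ b₀ := hG.1 _ hmem
      have e1 : Nat.card {σ : Perm V // FC σ ∧ σ a₀ = b₀ ∧
            ∀ p ∈ P, σ p.1 = p.2 ∨ σ p.2 = p.1}
          = Nat.card {σ : Perm V // FC σ ∧ σ a₀ = b₀} := by
        refine Nat.card_congr (Equiv.subtypeEquivRight fun σ => ?_)
        subst hPsing
        simp only [Finset.mem_singleton]
        constructor
        · rintro ⟨h1, h2, _⟩; exact ⟨h1, h2⟩
        · rintro ⟨h1, h2⟩
          exact ⟨h1, h2, by rintro p rfl; exact Or.inl h2⟩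
      rw [e1, anch_count (Fintype.card V) V rfl (by omega) a₀ b₀ hab]
      have harith : Fintype.card V - 2 = Fintype.card V - 1 - 1 := by omega
      rw [harith]; ring
    · -- inductive step, k ≥ 1
      have h3 : 3 ≤ Fintype.card V := by omega
      have hab₀ : a₀ ≠ b₀ := hG.1 _ hmem
      have herase : (P.erase (a₀, b₀)).Nonempty := by
        rw [← Finset.card_pos, Finset.card_erase_of_mem hmem, hcard]
        omega
      obtain ⟨p₁, hp₁e⟩ := herase
      obtain ⟨hne₁, hp₁⟩ := Finset.mem_erase.mp hp₁e
      have ha₁b₁ : p₁.1 ≠ p₁.2 := hG.1 _ hp₁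
      have hd := hG.2 p₁ hp₁ (a₀, b₀) hmem hne₁
      have ha₀1 : a₀ ≠ p₁.1 := hd.1.symm
      have ha₀2 : a₀ ≠ p₁.2 := hd.2.2.1.symm
      have hb₀1 : b₀ ≠ p₁.1 := hd.2.1.symm
      have hb₀2 : b₀ ≠ p₁.2 := hd.2.2.2.symm
      -- split according to the orientation of p₁
      have hsplit : Nat.card {σ : Perm V // FC σ ∧ σ a₀ = b₀ ∧
            ∀ p ∈ P, σ p.1 = p.2 ∨ σ p.2 = p.1}
          = Nat.card {σ : Perm V // (FC σ ∧ σ a₀ = b₀ ∧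
              ∀ p ∈ P, σ p.1 = p.2 ∨ σ p.2 = p.1) ∧ σ p₁.1 = p₁.2}
            + Nat.card {σ : Perm V // (FC σ ∧ σ a₀ = b₀ ∧
              ∀ p ∈ P, σ p.1 = p.2 ∨ σ p.2 = p.1) ∧ σ p₁.2 = p₁.1} := by
        rw [← Nat.card_sum]
        refine Nat.card_congr (Equiv.symm ?_)
        refine ⟨Sum.elim (fun t => ⟨t.1, t.2.1⟩) (fun t => ⟨t.1, t.2.1⟩),
          fun s => if h : s.1 p₁.1 = p₁.2 then Sum.inl ⟨s.1, s.2, h⟩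
            else Sum.inr ⟨s.1, s.2, (or_iff_right h).mp (s.2.2.2 p₁ hp₁)⟩,
          ?_, ?_⟩
        · rintro (t | t)
          · simp only [Sum.elim_inl]; exact dif_pos t.2.2
          · have hno : ¬ (t.1 p₁.1 = p₁.2) := by
              intro h
              exact t.2.1.1.no_two h3 p₁.1 (by rw [h, t.2.2])
            simp only [Sum.elim_inr]; exact dif_neg hno
        · intro s
          by_cases h : s.1 p₁.1 = p₁.2
          · simp only [dif_pos h, Sum.elim_inl]
          · simp only [dif_neg h, Sum.elim_inr]
      -- the two halves have the same cardinality (conjugation by the swap)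
      have hconj : Nat.card {σ : Perm V // (FC σ ∧ σ a₀ = b₀ ∧
              ∀ p ∈ P, σ p.1 = p.2 ∨ σ p.2 = p.1) ∧ σ p₁.2 = p₁.1}
          = Nat.card {σ : Perm V // (FC σ ∧ σ a₀ = b₀ ∧
              ∀ p ∈ P, σ p.1 = p.2 ∨ σ p.2 = p.1) ∧ σ p₁.1 = p₁.2} := by
        set c : Perm V := swap p₁.1 p₁.2 with hc
        have hcinv : c⁻¹ = c := Equiv.swap_inv _ _
        have hccx : ∀ x, c (c x) = x := fun x => Equiv.swap_apply_self _ _ x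
        have hzp : ∀ (σ : Perm V) (i : ℤ), (c * σ * c) ^ i = c * σ ^ i * c := by
          intro σ i
          have h1 : c * σ * c = (MulAut.conj c) σ := by
            rw [MulAut.conj_apply, hcinv]
          rw [h1, ← map_zpow, MulAut.conj_apply, hcinv]
        have hinv : ∀ σ : Perm V, c * (c * σ * c) * c = σ := by
          intro σ
          rw [hc]
          simp only [← mul_assoc, Equiv.swap_mul_self, one_mul,
            Equiv.mul_swap_mul_self]
        have happ : ∀ (σ : Perm V) (x : V), (c * σ * c) x = c (σ (c x)) :=
          fun σ x => rfl
        have hfixc : ∀ x, x ≠ p₁.1 → x ≠ p₁.2 → c x = x := fun x h1 h2 =>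
          Equiv.swap_apply_of_ne_of_ne h1 h2
        have hwd : ∀ (σ : Perm V) (u v : V),
            (FC σ ∧ σ a₀ = b₀ ∧ ∀ p ∈ P, σ p.1 = p.2 ∨ σ p.2 = p.1) → σ u = v →
            ((u = p₁.1 ∧ v = p₁.2) ∨ (u = p₁.2 ∧ v = p₁.1)) →
            (FC (c * σ * c) ∧ (c * σ * c) a₀ = b₀ ∧
              ∀ p ∈ P, (c * σ * c) p.1 = p.2 ∨ (c * σ * c) p.2 = p.1)
              ∧ (c * σ * c) v = u := by
          rintro σ u v ⟨hfc, hanch, hP⟩ huv hcase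
          have hcv : c v = u := by
            rcases hcase with ⟨rfl, rfl⟩ | ⟨rfl, rfl⟩
            · exact Equiv.swap_apply_right _ _
            · exact Equiv.swap_apply_left _ _
          have hvu : (c * σ * c) v = u := by
            rw [happ, hcv, huv, hcv]
          have hfc' : FC (c * σ * c) := by
            constructor
            · intro x hx
              rw [happ] at hx
              have hx2 := congrArg c hx
              rw [hccx] at hx2
              exact hfc.1 (c x) hx2
            · intro x y
              obtain ⟨i, hi⟩ := hfc.2 (c x) (c y)
              refine ⟨i, ?_⟩
              rw [hzp]
              show c ((σ ^ i) (c x)) = y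
              rw [hi, hccx]
          refine ⟨⟨hfc', ?_, ?_⟩, hvu⟩
          · rw [happ, hfixc a₀ ha₀1 ha₀2, hanch, hfixc b₀ hb₀1 hb₀2]
          · intro p hp
            rcases eq_or_ne p p₁ with rfl | hpne
            · rcases hcase with ⟨hu, hv⟩ | ⟨hu, hv⟩
              · right; rw [← hu, ← hv]; exact hvu
              · left; rw [← hu, ← hv]; exact hvu
            · have hq := hG.2 p hp p₁ hp₁ hpne
              rcases hP p hp with h | h
              · left
                rw [happ, hfixc p.1 hq.1 hq.2.1, h, hfixc p.2 hq.2.2.1 hq.2.2.2]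
              · right
                rw [happ, hfixc p.2 hq.2.2.1 hq.2.2.2, h, hfixc p.1 hq.1 hq.2.1]
        refine Nat.card_congr ⟨fun s => ⟨c * s.1 * c,
            hwd s.1 p₁.2 p₁.1 s.2.1 s.2.2 (Or.inr ⟨rfl, rfl⟩)⟩,
          fun t => ⟨c * t.1 * c,
            hwd t.1 p₁.1 p₁.2 t.2.1 t.2.2 (Or.inl ⟨rfl, rfl⟩)⟩, ?_, ?_⟩
        · intro s; exact Subtype.ext (hinv s.1)
        · intro t; exact Subtype.ext (hinv t.1)
      -- setting up the contracted instance
      obtain ⟨k', rfl⟩ : ∃ k', k = k' + 1 := ⟨k - 1, by omega⟩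
      have hcardV' : Fintype.card {x : V // x ≠ p₁.1} = Fintype.card V - 1 := by
        rw [Fintype.card_subtype_compl, Fintype.card_subtype_eq]
      have hcoord : ∀ q ∈ P.erase p₁,
          q.1 ≠ p₁.1 ∧ q.1 ≠ p₁.2 ∧ q.2 ≠ p₁.1 ∧ q.2 ≠ p₁.2 := by
        intro q hq
        obtain ⟨hqne, hqP⟩ := Finset.mem_erase.mp hq
        exact hG.2 q hqP p₁ hp₁ hqne
      set lift : {q // q ∈ P.erase p₁} → {x : V // x ≠ p₁.1} × {x : V // x ≠ p₁.1} :=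
        fun q => ((⟨q.1.1, (hcoord q.1 q.2).1⟩ : {x : V // x ≠ p₁.1}), (⟨q.1.2, (hcoord q.1 q.2).2.2.1⟩ : {x : V // x ≠ p₁.1}))
        with hlift
      set P' : Finset ({x : V // x ≠ p₁.1} × {x : V // x ≠ p₁.1}) := (P.erase p₁).attach.image lift with hP'
      have hliftinj : Function.Injective lift := by
        intro q r h
        rw [hlift] at h
        simp only [Prod.mk.injEq, Subtype.mk.injEq] at h
        exact Subtype.ext (Prod.ext h.1 h.2)
      have hmem' : ∀ p' : {x : V // x ≠ p₁.1} × {x : V // x ≠ p₁.1}, p' ∈ P' ↔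
          ((p'.1 : V), (p'.2 : V)) ∈ P.erase p₁ := by
        intro p'
        rw [hP', Finset.mem_image]
        constructor
        · rintro ⟨q, _, rfl⟩
          rw [hlift]
          exact q.2
        · intro h
          refine ⟨⟨((p'.1 : V), (p'.2 : V)), h⟩, Finset.mem_attach _ _, ?_⟩
          rw [hlift]
      have hcard' : P'.card = k' + 1 := by
        rw [hP', Finset.card_image_of_injective _ hliftinj, Finset.card_attach,
          Finset.card_erase_of_mem hp₁, hcard]
        omega
      have hG' : GoodP P' := by
        constructor
        · intro p' hp'
          rw [hmem'] at hp'
          obtain ⟨_, hpP⟩ := Finset.mem_erase.mp hp'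
          intro h
          exact hG.1 _ hpP (congrArg Subtype.val h)
        · intro p' hp' q' hq' hpq
          rw [hmem'] at hp' hq'
          obtain ⟨_, hpP⟩ := Finset.mem_erase.mp hp'
          obtain ⟨_, hqP⟩ := Finset.mem_erase.mp hq'
          have hpqv : ((p'.1 : V), (p'.2 : V)) ≠ ((q'.1 : V), (q'.2 : V)) := by
            intro h
            apply hpq
            have h1 := congrArg Prod.fst h
            have h2 := congrArg Prod.snd h
            exact Prod.ext (Subtype.ext h1) (Subtype.ext h2)
          have := hG.2 _ hpP _ hqP hpqv
          exact ⟨fun h => this.1 (congrArg Subtype.val h),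
            fun h => this.2.1 (congrArg Subtype.val h),
            fun h => this.2.2.1 (congrArg Subtype.val h),
            fun h => this.2.2.2 (congrArg Subtype.val h)⟩
      have hanch' : ((⟨a₀, ha₀1⟩ : {x : V // x ≠ p₁.1}), (⟨b₀, hb₀1⟩ : {x : V // x ≠ p₁.1})) ∈ P' := by
        rw [hmem']
        exact Finset.mem_erase.mpr ⟨hne₁.symm, hmem⟩
      have h2k' : 2 * (k' + 1) ≤ Fintype.card {x : V // x ≠ p₁.1} := by
        rw [hcardV']; omega
      -- reshape D₊ and contract
      have hDplus : Nat.card {σ : Perm V // (FC σ ∧ σ a₀ = b₀ ∧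
              ∀ p ∈ P, σ p.1 = p.2 ∨ σ p.2 = p.1) ∧ σ p₁.1 = p₁.2}
          = 2 ^ k' * (Fintype.card V - 1 - (k' + 1) - 1).factorial := by
        have e1 : Nat.card {σ : Perm V // (FC σ ∧ σ a₀ = b₀ ∧
              ∀ p ∈ P, σ p.1 = p.2 ∨ σ p.2 = p.1) ∧ σ p₁.1 = p₁.2}
            = Nat.card {σ : Perm V // FC σ ∧ σ p₁.1 = p₁.2 ∧
              (σ a₀ = b₀ ∧ ∀ p ∈ P.erase p₁, σ p.1 = p.2 ∨ σ p.2 = p.1)} := by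
          refine Nat.card_congr (Equiv.subtypeEquivRight fun σ => ?_)
          constructor
          · rintro ⟨⟨h1, h2, h3'⟩, h4⟩
            exact ⟨h1, h4, h2, fun p hp => h3' p (Finset.mem_of_mem_erase hp)⟩
          · rintro ⟨h1, h4, h2, h3'⟩
            refine ⟨⟨h1, h2, ?_⟩, h4⟩
            intro p hp
            rcases eq_or_ne p p₁ with rfl | hpne
            · exact Or.inl h4
            · exact h3' p (Finset.mem_erase.mpr ⟨hpne, hp⟩)
        rw [e1]
        rw [contract_card ha₁b₁ h3
          (fun σ => σ a₀ = b₀ ∧ ∀ p ∈ P.erase p₁, σ p.1 = p.2 ∨ σ p.2 = p.1)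
          (fun τ => τ ⟨a₀, ha₀1⟩ = ⟨b₀, hb₀1⟩ ∧
            ∀ p ∈ P', τ p.1 = p.2 ∨ τ p.2 = p.1) ?_]
        · have := ihk {x : V // x ≠ p₁.1} ⟨a₀, ha₀1⟩ ⟨b₀, hb₀1⟩ P' (by omega) h2k' hanch' hcard' hG'
          rw [this, hcardV']
          norm_num
        · -- transport of the side conditions
          intro σ hfc hσ₁ τ hτval
          have htrans : ∀ (x y : V) (hx : x ≠ p₁.1) (hy1 : y ≠ p₁.1)
              (hy2 : y ≠ p₁.2), (τ ⟨x, hx⟩ = ⟨y, hy1⟩ ↔ σ x = y) := by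
            intro x y hx hy1 hy2
            constructor
            · intro h
              have hv : (τ ⟨x, hx⟩ : V) = y := congrArg Subtype.val h
              rw [hτval] at hv
              have hv2 := congrArg (swap p₁.1 p₁.2) hv
              rw [Equiv.swap_apply_self,
                Equiv.swap_apply_of_ne_of_ne hy1 hy2] at hv2
              exact hv2
            · intro h
              refine Subtype.ext ?_
              rw [hτval]
              show swap p₁.1 p₁.2 (σ x) = y
              rw [h, Equiv.swap_apply_of_ne_of_ne hy1 hy2]
          constructor
          · rintro ⟨hanch, hPs⟩
            refine ⟨(htrans a₀ b₀ ha₀1 hb₀1 hb₀2).mpr hanch, ?_⟩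
            intro p' hp'
            rw [hmem'] at hp'
            have hco := hcoord _ hp'
            have hqe := hp'
            rcases hPs _ hp' with h | h
            · exact Or.inl ((htrans _ _ hco.1 hco.2.2.1 hco.2.2.2).mpr h)
            · exact Or.inr ((htrans _ _ hco.2.2.1 hco.1 hco.2.1).mpr h)
          · rintro ⟨hanch, hP's⟩
            refine ⟨(htrans a₀ b₀ ha₀1 hb₀1 hb₀2).mp hanch, ?_⟩
            intro q hq
            have hco := hcoord _ hq
            have hq' : ((⟨q.1, hco.1⟩ : {x : V // x ≠ p₁.1}), (⟨q.2, hco.2.2.1⟩ : {x : V // x ≠ p₁.1})) ∈ P' := by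
              rw [hmem']
              exact hq
            rcases hP's _ hq' with h | h
            · exact Or.inl ((htrans _ _ hco.1 hco.2.2.1 hco.2.2.2).mp h)
            · exact Or.inr ((htrans _ _ hco.2.2.1 hco.1 hco.2.1).mp h)
      rw [hsplit, hconj, hDplus]
      have harith : Fintype.card V - 1 - (k' + 1) - 1
          = Fintype.card V - (k' + 1 + 1) - 1 := by omega
      rw [harith]
      have hk : k' + 1 + 1 - 1 = k' + 1 := by omega
      rw [hk, pow_succ]
      ring

end DCount

/-- For `n ≥ 5` and a matching `M` of size `k` (`1 ≤ k`, `2k ≤ n`) in `K_n`, the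
number of Hamiltonian cycles of `K_n` containing `M` is `2^(k-1) * (n-k-1)!`. -/
theorem hamCycle_count_through_matching (n k : ℕ) (hn : 5 ≤ n)
    (hk : 1 ≤ k) (hkn : 2 * k ≤ n)
    (M : Finset (Sym2 (Fin n))) (hcard : M.card = k)
    (hEdges : ∀ e ∈ M, ¬ e.IsDiag)
    (hDisj : ∀ e ∈ M, ∀ f ∈ M, e ≠ f → ∀ v : Fin n, v ∈ e → v ∉ f) :
    Nat.card {G : SimpleGraph (Fin n) // IsHamCycle G ∧ ∀ e ∈ M, e ∈ G.edgeSet} =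
      2 ^ (k - 1) * (n - k - 1).factorial := by
  classical
  haveI hnon : Nonempty (Fin n) := ⟨⟨0, by omega⟩⟩
  have hc3 : 3 ≤ Fintype.card (Fin n) := by rw [Fintype.card_fin]; omega
  have houtinj : Function.Injective (fun e : Sym2 (Fin n) => Quot.out e) := by
    intro e f h
    have h2 : Sym2.mk (Quot.out e).1 (Quot.out e).2 = Sym2.mk (Quot.out f).1 (Quot.out f).2 :=
      congrArg (fun p => Sym2.mk p.1 p.2) h
    have he' : Sym2.mk (Quot.out e).1 (Quot.out e).2 = e := Quot.out_eq e
    have hf' : Sym2.mk (Quot.out f).1 (Quot.out f).2 = f := Quot.out_eq f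
    exact he'.symm.trans (h2.trans hf')
  have houtne : ∀ e ∈ M, (Quot.out e).1 ≠ (Quot.out e).2 := by
    intro e he hq
    apply hEdges e he
    rw [← Quot.out_eq e]
    exact hq
  have houte : ∀ (e : Sym2 (Fin n)) (a : Fin n), (a = (Quot.out e).1 ∨ a = (Quot.out e).2) → a ∈ e := by
    intro e a ha
    have he' : Sym2.mk (Quot.out e).1 (Quot.out e).2 = e := Quot.out_eq e
    have h2 : a ∈ Sym2.mk (Quot.out e).1 (Quot.out e).2 := Sym2.mem_iff.mpr ha
    rwa [he'] at h2
  have hout1 : ∀ e : Sym2 (Fin n), (Quot.out e).1 ∈ e := fun e => houte e _ (Or.inl rfl)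
  have hout2 : ∀ e : Sym2 (Fin n), (Quot.out e).2 ∈ e := fun e => houte e _ (Or.inr rfl)
  set P : Finset (Fin n × Fin n) := M.image (fun e => Quot.out e) with hP
  obtain ⟨e₀, he₀⟩ : M.Nonempty := by rw [← Finset.card_pos, hcard]; omega
  set p₀ : Fin n × Fin n := Quot.out e₀ with hp₀
  have hp₀P : p₀ ∈ P := Finset.mem_image_of_mem _ he₀
  have hPcard : P.card = k := by
    rw [hP, Finset.card_image_of_injective _ houtinj, hcard]
  have hGP : GoodP P := by
    constructor
    · intro p hp
      obtain ⟨e, he, rfl⟩ := Finset.mem_image.mp hp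
      exact houtne e he
    · intro p hp q hq hpq
      obtain ⟨e, he, rfl⟩ := Finset.mem_image.mp hp
      obtain ⟨f, hf, rfl⟩ := Finset.mem_image.mp hq
      have hef : e ≠ f := fun h => hpq (by rw [h])
      have hd := hDisj e he f hf hef
      refine ⟨?_, ?_, ?_, ?_⟩ <;> intro heq
      · exact hd _ (hout1 e) (houte f _ (Or.inl heq))
      · exact hd _ (hout1 e) (houte f _ (Or.inr heq))
      · exact hd _ (hout2 e) (houte f _ (Or.inl heq))
      · exact hd _ (hout2 e) (houte f _ (Or.inr heq))
  have hDval := Dcount k (Fin n) p₀.1 p₀.2 P hk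
    (by rw [Fintype.card_fin]; exact hkn) hp₀P hPcard hGP
  rw [Fintype.card_fin] at hDval
  rw [← hDval]
  -- translation between Hamiltonian-cycle graphs and full cycles
  have hchar2 : ∀ (σ : Perm (Fin n)), FC σ → ∀ v y : Fin n,
      (SimpleGraph.fromRel (fun x y => σ x = y)).Adj v y ↔ (σ v = y ∨ σ y = v) := by
    intro σ hσ v y
    rw [SimpleGraph.fromRel_adj]
    constructor
    · exact fun h => h.2
    · intro h
      refine ⟨?_, h⟩
      rcases h with h | h
      · intro hvy; rw [hvy] at h; exact hσ.1 y h
      · intro hvy; rw [hvy] at h; exact hσ.1 y h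
  have hGrHam : ∀ (σ : Perm (Fin n)), FC σ →
      IsHamCycle (SimpleGraph.fromRel (fun x y => σ x = y)) := by
    intro σ hσ
    constructor
    · rw [SimpleGraph.connected_iff]
      refine ⟨?_, hnon⟩
      have hreach : ∀ (i : ℕ) (x : Fin n),
          (SimpleGraph.fromRel (fun x y => σ x = y)).Reachable x ((σ ^ i) x) := by
        intro i
        induction i with
        | zero =>
          intro x
          rw [pow_zero]
          exact SimpleGraph.Reachable.refl x
        | succ i ih =>
          intro x
          refine (ih x).trans ?_
          have h1 : (σ ^ (i + 1)) x = σ ((σ ^ i) x) := by rw [pow_succ']; rfl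
          rw [h1]
          exact ((hchar2 σ hσ _ _).mpr (Or.inl rfl)).reachable
      intro u v
      obtain ⟨i, _, hi⟩ := (hσ.2 u v).exists_pow_eq'
      rw [← hi]
      exact hreach i u
    · intro v
      have hne2 : σ v ≠ σ⁻¹ v := by
        intro h
        have h2 := congrArg σ h
        rw [show σ (σ⁻¹ v) = v from Equiv.apply_symm_apply σ v] at h2
        exact hσ.no_two hc3 v h2
      have hns : (SimpleGraph.fromRel (fun x y => σ x = y)).neighborSet v
          = {σ v, σ⁻¹ v} := by
        ext y
        simp only [SimpleGraph.mem_neighborSet, hchar2 σ hσ v y,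
          Set.mem_insert_iff, Set.mem_singleton_iff]
        constructor
        · rintro (h | h)
          · exact Or.inl h.symm
          · refine Or.inr ?_
            rw [← h, show σ⁻¹ (σ y) = y from Equiv.symm_apply_apply σ y]
        · rintro (rfl | rfl)
          · exact Or.inl rfl
          · exact Or.inr (Equiv.apply_symm_apply σ v)
      rw [hns, Set.ncard_pair hne2]
  have hGrEdge : ∀ (σ : Perm (Fin n)), FC σ →
      (∀ p ∈ P, σ p.1 = p.2 ∨ σ p.2 = p.1) → ∀ e ∈ M,
      e ∈ (SimpleGraph.fromRel (fun x y => σ x = y)).edgeSet := by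
    intro σ hσ hPs e he
    have hpmem : Quot.out e ∈ P := Finset.mem_image_of_mem _ he
    have hadj : (SimpleGraph.fromRel (fun x y => σ x = y)).Adj
        (Quot.out e).1 (Quot.out e).2 :=
      (hchar2 σ hσ _ _).mpr (hPs _ hpmem)
    have he' : Sym2.mk (Quot.out e).1 (Quot.out e).2 = e := Quot.out_eq e
    have h2 : Sym2.mk (Quot.out e).1 (Quot.out e).2 ∈ (SimpleGraph.fromRel (fun x y => σ x = y)).edgeSet :=
      (SimpleGraph.mem_edgeSet _).mpr hadj
    rwa [he'] at h2
  refine (Nat.card_eq_of_bijective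
    (fun s => ⟨SimpleGraph.fromRel (fun x y => s.1 x = y),
      hGrHam s.1 s.2.1, hGrEdge s.1 s.2.1 s.2.2.2⟩) ⟨?_, ?_⟩).symm
  · -- injectivity
    rintro ⟨σ, hσfc, hσa, hσP⟩ ⟨σ', hσfc', hσa', hσP'⟩ heq
    have hGeq : SimpleGraph.fromRel (fun x y => σ x = y)
        = SimpleGraph.fromRel (fun x y => σ' x = y) := congrArg Subtype.val heq
    have hAdj : ∀ v y : Fin n, (σ v = y ∨ σ y = v) ↔ (σ' v = y ∨ σ' y = v) := by
      intro v y
      rw [← hchar2 σ hσfc v y, ← hchar2 σ' hσfc' v y, hGeq]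
    have happly : ∀ (ρ : Perm (Fin n)) (m : ℕ) (x : Fin n),
        (ρ ^ (m + 1)) x = ρ ((ρ ^ m) x) := by
      intro ρ m x; rw [pow_succ']; rfl
    have hstep : ∀ v : Fin n, σ' v = σ v ∨ σ (σ' v) = v := by
      intro v
      rcases (hAdj v (σ' v)).mpr (Or.inl rfl) with h | h
      · exact Or.inl h.symm
      · exact Or.inr h
    have hind : ∀ m : ℕ, (σ' ^ m) p₀.2 = (σ ^ m) p₀.2
        ∧ (σ' ^ (m + 1)) p₀.2 = (σ ^ (m + 1)) p₀.2 := by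
      intro m
      induction m with
      | zero =>
        refine ⟨rfl, ?_⟩
        rw [happly σ' 0 p₀.2, happly σ 0 p₀.2, pow_zero, pow_zero]
        rcases hstep p₀.2 with h | h
        · exact h
        · exfalso
          have h2 : σ' p₀.2 = p₀.1 := by
            apply σ.injective
            rw [h, hσa]
          have h3 : σ' (σ' p₀.1) = p₀.1 := by rw [hσa', h2]
          exact hσfc'.no_two hc3 p₀.1 h3
      | succ m ih =>
        refine ⟨ih.2, ?_⟩
        rcases hstep ((σ ^ (m + 1)) p₀.2) with h | h
        · rw [happly σ' (m + 1) p₀.2, happly σ (m + 1) p₀.2, ih.2, h]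
        · exfalso
          have hv : (σ ^ (m + 1)) p₀.2 = σ ((σ ^ m) p₀.2) := happly σ m p₀.2
          have h2 : σ' ((σ ^ (m + 1)) p₀.2) = (σ ^ m) p₀.2 := by
            apply σ.injective
            rw [h, hv]
          have h3 : (σ' ^ (m + 2)) p₀.2 = (σ' ^ m) p₀.2 := by
            rw [happly σ' (m + 1) p₀.2, ih.2, h2, ih.1]
          have h4 : (σ' ^ m) ((σ' ^ 2) p₀.2) = (σ' ^ m) p₀.2 := by
            rw [← Equiv.Perm.mul_apply, ← pow_add]
            exact h3
          have h5 : (σ' ^ 2) p₀.2 = p₀.2 := (σ' ^ m).injective h4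
          rw [show (2 : ℕ) = 1 + 1 from rfl, pow_succ, pow_one,
            Equiv.Perm.mul_apply] at h5
          exact hσfc'.no_two hc3 p₀.2 h5
    refine Subtype.ext (Equiv.ext fun v => ?_)
    obtain ⟨i, _, hi⟩ := (hσfc.2 p₀.2 v).exists_pow_eq'
    calc σ v = σ ((σ ^ i) p₀.2) := by rw [hi]
      _ = (σ ^ (i + 1)) p₀.2 := (happly σ i p₀.2).symm
      _ = (σ' ^ (i + 1)) p₀.2 := (hind i).2.symm
      _ = σ' ((σ' ^ i) p₀.2) := happly σ' i p₀.2
      _ = σ' ((σ ^ i) p₀.2) := by rw [(hind i).1]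
      _ = σ' v := by rw [hi]
  · -- surjectivity
    rintro ⟨G, ⟨hconn, hdeg⟩, hM⟩
    haveI : DecidableRel G.Adj := Classical.decRel _
    have hdeg2 : ∀ v, (G.neighborFinset v).card = 2 := by
      intro v
      have h := hdeg v
      rwa [Set.ncard_eq_toFinset_card', ← SimpleGraph.neighborFinset_def] at h
    have hpair' : ∀ v u : Fin n, ∃ w, G.Adj v u →
        (G.Adj v w ∧ w ≠ u ∧ ∀ z, G.Adj v z → z ≠ u → z = w) := by
      intro v u
      by_cases h : G.Adj v u
      · have hu : u ∈ G.neighborFinset v := (SimpleGraph.mem_neighborFinset _ _ _).mpr h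
        have hcard1 : ((G.neighborFinset v).erase u).card = 1 := by
          rw [Finset.card_erase_of_mem hu, hdeg2 v]
        obtain ⟨w, hw⟩ := Finset.card_eq_one.mp hcard1
        have hwmem : w ∈ (G.neighborFinset v).erase u := by
          rw [hw]; exact Finset.mem_singleton_self w
        refine ⟨w, fun _ => ⟨?_, ?_, ?_⟩⟩
        · exact (SimpleGraph.mem_neighborFinset _ _ _).mp
            (Finset.mem_of_mem_erase hwmem)
        · exact Finset.ne_of_mem_erase hwmem
        · intro z hz hzu
          have hzmem : z ∈ (G.neighborFinset v).erase u :=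
            Finset.mem_erase.mpr ⟨hzu, (SimpleGraph.mem_neighborFinset _ _ _).mpr hz⟩
          rw [hw] at hzmem
          exact Finset.mem_singleton.mp hzmem
      · exact ⟨v, fun hadj => absurd hadj h⟩
    choose other hother using hpair'
    set f : Fin n × Fin n → Fin n × Fin n := fun d => (d.2, other d.2 d.1) with hf
    have hfadj : ∀ d : Fin n × Fin n, G.Adj d.1 d.2 → G.Adj (f d).1 (f d).2 := by
      intro d hd
      exact (hother d.2 d.1 hd.symm).1
    have hfinj : ∀ d d' : Fin n × Fin n, G.Adj d.1 d.2 → G.Adj d'.1 d'.2 →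
        f d = f d' → d = d' := by
      intro d d' hd hd' h
      have h2 : d.2 = d'.2 := congrArg Prod.fst h
      have h3 : other d.2 d.1 = other d'.2 d'.1 := congrArg Prod.snd h
      by_cases h1 : d.1 = d'.1
      · exact Prod.ext h1 h2
      · exfalso
        have hda : G.Adj d.2 d.1 := hd.symm
        have hdb : G.Adj d.2 d'.1 := by rw [h2]; exact hd'.symm
        have e1 : d'.1 = other d.2 d.1 :=
          (hother d.2 d.1 hda).2.2 d'.1 hdb (fun hh => h1 hh.symm)
        have e2 : d.1 = other d.2 d'.1 := by
          have hda' : G.Adj d'.2 d.1 := by rw [← h2]; exact hda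
          have := (hother d'.2 d'.1 hd'.symm).2.2 d.1 hda' h1
          rw [← h2] at this
          exact this
        rw [← h2] at h3
        exact h1 ((e2.trans h3.symm).trans e1.symm)
    have hiter : ∀ (m : ℕ) (d : Fin n × Fin n), G.Adj d.1 d.2 →
        G.Adj (f^[m] d).1 (f^[m] d).2 := by
      intro m
      induction m with
      | zero => exact fun d hd => hd
      | succ m ih =>
        intro d hd
        rw [Function.iterate_succ_apply]
        exact ih (f d) (hfadj d hd)
    have hcancel : ∀ (m : ℕ) (d d' : Fin n × Fin n), G.Adj d.1 d.2 →
        G.Adj d'.1 d'.2 → f^[m] d = f^[m] d' → d = d' := by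
      intro m
      induction m with
      | zero => exact fun d d' _ _ h => h
      | succ m ih =>
        intro d d' hd hd' h
        rw [Function.iterate_succ_apply, Function.iterate_succ_apply] at h
        exact hfinj d d' hd hd' (ih (f d) (f d') (hfadj d hd) (hfadj d' hd') h)
    have hAdj₀ : G.Adj p₀.1 p₀.2 := by
      have h := hM e₀ he₀
      rw [← Quot.out_eq e₀] at h
      exact (SimpleGraph.mem_edgeSet _).mp h
    have hd₀ : G.Adj (p₀ : Fin n × Fin n).1 p₀.2 := hAdj₀
    -- periodicity
    obtain ⟨T, hT1, hTfix⟩ : ∃ T, 1 ≤ T ∧ f^[T] p₀ = p₀ := by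
      obtain ⟨x, y, hxy, hfeq⟩ :=
        Finite.exists_ne_map_eq_of_infinite (fun m : ℕ => f^[m] p₀)
      rcases lt_or_gt_of_ne hxy with hlt | hlt
      · refine ⟨y - x, by omega, ?_⟩
        have h1 : f^[x + (y - x)] p₀ = f^[x] p₀ := by
          rw [Nat.add_sub_cancel' hlt.le]
          exact hfeq.symm
        rw [Function.iterate_add_apply] at h1
        exact hcancel x _ _ (hiter _ _ hd₀) hd₀ h1
      · refine ⟨x - y, by omega, ?_⟩
        have h1 : f^[y + (x - y)] p₀ = f^[y] p₀ := by
          rw [Nat.add_sub_cancel' hlt.le]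
          exact hfeq
        rw [Function.iterate_add_apply] at h1
        exact hcancel y _ _ (hiter _ _ hd₀) hd₀ h1
    have hperiod : ∀ m, f^[m + T] p₀ = f^[m] p₀ := by
      intro m
      rw [Function.iterate_add_apply, hTfix]
    -- the reversal map
    have hrf : ∀ d : Fin n × Fin n, G.Adj d.1 d.2 → f (Prod.swap (f d)) = Prod.swap d := by
      intro d hd
      have hsp := hother d.2 d.1 hd.symm
      have hback : other d.2 (other d.2 d.1) = d.1 :=
        ((hother d.2 (other d.2 d.1) hsp.1).2.2 d.1 hd.symm
          (fun hh => hsp.2.1 hh.symm)).symm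
      exact Prod.ext rfl hback
    have hfr_ne : ∀ d : Fin n × Fin n, G.Adj d.1 d.2 → f d ≠ Prod.swap d := by
      intro d hd h
      have h2 : other d.2 d.1 = d.1 := congrArg Prod.snd h
      exact (hother d.2 d.1 hd.symm).2.1 h2
    have hrne : ∀ d : Fin n × Fin n, G.Adj d.1 d.2 → Prod.swap d ≠ d := by
      intro d hd h
      have h2 : d.2 = d.1 := congrArg Prod.fst h
      exact hd.ne h2.symm
    have hA : ∀ (m : ℕ) (d : Fin n × Fin n), G.Adj d.1 d.2 →
        f^[m] (Prod.swap (f^[m] d)) = Prod.swap d := by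
      intro m
      induction m with
      | zero => intro d _; rfl
      | succ m ih =>
        intro d hd
        have h1 : f^[m + 1] d = f (f^[m] d) := Function.iterate_succ_apply' f m d
        calc f^[m + 1] (Prod.swap (f^[m + 1] d))
            = f^[m] (f (Prod.swap (f (f^[m] d)))) := by
              rw [h1, Function.iterate_succ_apply]
          _ = f^[m] (Prod.swap (f^[m] d)) := by rw [hrf _ (hiter m d hd)]
          _ = Prod.swap d := ih d hd
    have hnotorb : ∀ s : ℕ, f^[s] p₀ ≠ Prod.swap p₀ := by
      intro s hs
      rcases Nat.even_or_odd s with ⟨t, ht⟩ | ⟨t, ht⟩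
      · subst ht
        have he : G.Adj (f^[t] p₀).1 (f^[t] p₀).2 := hiter t p₀ hd₀
        have h1 : f^[t] (f^[t] p₀) = Prod.swap p₀ := by
          rw [← Function.iterate_add_apply]
          exact hs
        have h2 : f^[t] (Prod.swap (f^[t] p₀)) = Prod.swap p₀ := hA t p₀ hd₀
        have h3 := hcancel t (f^[t] p₀) (Prod.swap (f^[t] p₀)) he he.symm
          (h1.trans h2.symm)
        exact hrne _ he h3.symm
      · have he : G.Adj (f^[t] p₀).1 (f^[t] p₀).2 := hiter t p₀ hd₀
        have h1 : f^[t] (f^[t + 1] p₀) = Prod.swap p₀ := by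
          rw [← Function.iterate_add_apply]
          have harith : t + (t + 1) = s := by omega
          rw [harith]
          exact hs
        have h2 : f^[t] (Prod.swap (f^[t] p₀)) = Prod.swap p₀ := hA t p₀ hd₀
        have h3 : f^[t + 1] p₀ = Prod.swap (f^[t] p₀) :=
          hcancel t _ _ (hiter (t + 1) p₀ hd₀) he.symm (h1.trans h2.symm)
        rw [Function.iterate_succ_apply'] at h3
        exact hfr_ne _ he h3
    have huniq : ∀ i j, (f^[i] p₀).1 = (f^[j] p₀).1 → f^[i] p₀ = f^[j] p₀ := by
      intro i j hfst
      by_contra hne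
      have hsnd : (f^[i] p₀).2 ≠ (f^[j] p₀).2 := by
        intro h; exact hne (Prod.ext hfst h)
      have hdi : G.Adj (f^[i] p₀).1 (f^[i] p₀).2 := hiter i p₀ hd₀
      have hdj : G.Adj (f^[j] p₀).1 (f^[j] p₀).2 := hiter j p₀ hd₀
      have hkey : f (Prod.swap (f^[i] p₀)) = f^[j] p₀ := by
        have h1 : other (f^[i] p₀).1 (f^[i] p₀).2 = (f^[j] p₀).2 := by
          have hadjj : G.Adj (f^[i] p₀).1 (f^[j] p₀).2 := by
            rw [hfst]; exact hdj
          exact ((hother (f^[i] p₀).1 (f^[i] p₀).2 hdi).2.2 (f^[j] p₀).2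
            hadjj hsnd.symm).symm
        exact Prod.ext hfst h1
      rcases Nat.eq_zero_or_pos j with rfl | hj
      · rcases Nat.eq_zero_or_pos i with rfl | hi
        · exact hne rfl
        · have h1 : f^[i] p₀ = f (f^[i - 1] p₀) := by
            rw [← Function.iterate_succ_apply' f (i - 1) p₀]
            congr 1
            omega
          have he : G.Adj (f^[i - 1] p₀).1 (f^[i - 1] p₀).2 := hiter _ p₀ hd₀
          have h2 : Prod.swap (f^[i - 1] p₀) = p₀ := by
            rw [← hrf _ he, ← h1]
            exact hkey
          have h3 : f^[i - 1] p₀ = Prod.swap p₀ := by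
            have h4 := congrArg Prod.swap h2
            rwa [Prod.swap_swap] at h4
          exact hnotorb _ h3
      · have h1 : f^[j] p₀ = f (f^[j - 1] p₀) := by
          rw [← Function.iterate_succ_apply' f (j - 1) p₀]
          congr 1
          omega
        have hejm : G.Adj (f^[j - 1] p₀).1 (f^[j - 1] p₀).2 := hiter _ p₀ hd₀
        have h2 : Prod.swap (f^[i] p₀) = f^[j - 1] p₀ :=
          hfinj _ _ hdi.symm hejm (by rw [← h1]; exact hkey)
        have h3 : f^[i] (Prod.swap (f^[i] p₀)) = Prod.swap p₀ := hA i p₀ hd₀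
        rw [h2, ← Function.iterate_add_apply] at h3
        exact hnotorb _ h3
    -- every vertex occurs
    have hclosed : ∀ v w, (∃ m, (f^[m] p₀).1 = v) → G.Adj v w →
        ∃ m', (f^[m'] p₀).1 = w := by
      rintro v w ⟨m, hm⟩ hvw
      have hsucc : (f^[m + 1] p₀).1 = (f^[m] p₀).2 := by
        rw [Function.iterate_succ_apply']
      have hpred : f (f^[m + T - 1] p₀) = f^[m] p₀ := by
        have h0 : f^[m + T - 1 + 1] p₀ = f^[m] p₀ := by
          have harith : m + T - 1 + 1 = m + T := by omega
          rw [harith]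
          exact hperiod m
        rw [Function.iterate_succ_apply'] at h0
        exact h0
      have hp'adj : G.Adj (f^[m + T - 1] p₀).1 (f^[m + T - 1] p₀).2 :=
        hiter _ p₀ hd₀
      have hp2 : (f^[m + T - 1] p₀).2 = v := by
        have h2 := congrArg Prod.fst hpred
        rw [hm] at h2
        exact h2
      have hoth : other v (f^[m + T - 1] p₀).1 = (f^[m] p₀).2 := by
        have h2 : other (f^[m + T - 1] p₀).2 (f^[m + T - 1] p₀).1 = (f^[m] p₀).2 :=
          congrArg Prod.snd hpred
        rwa [hp2] at h2
      have hadj1 : G.Adj v (f^[m + T - 1] p₀).1 := by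
        rw [← hp2]
        exact hp'adj.symm
      by_cases hw : w = (f^[m] p₀).2
      · exact ⟨m + 1, by rw [hsucc, hw]⟩
      · by_cases hwp : w = (f^[m + T - 1] p₀).1
        · exact ⟨m + T - 1, hwp.symm⟩
        · exfalso
          have := (hother v (f^[m + T - 1] p₀).1 hadj1).2.2 w hvw hwp
          rw [hoth] at this
          exact hw this
    have hfind : ∀ w : Fin n, ∃ m, (f^[m] p₀).1 = w := by
      have hwalk : ∀ (u w : Fin n) (p : G.Walk u w),
          (∃ m, (f^[m] p₀).1 = u) → ∃ m, (f^[m] p₀).1 = w := by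
        intro u w p
        induction p with
        | nil => exact id
        | cons h q ih => exact fun hu => ih (hclosed _ _ hu h)
      intro w
      obtain ⟨p⟩ := hconn.preconnected p₀.1 w
      exact hwalk _ _ p ⟨0, rfl⟩
    set σf : Fin n → Fin n := fun v => (f^[Nat.find (hfind v)] p₀).2 with hσf
    have hσfval : ∀ m, σf ((f^[m] p₀).1) = (f^[m] p₀).2 := by
      intro m
      have hspec := Nat.find_spec (hfind ((f^[m] p₀).1))
      have h2 := huniq _ _ hspec
      exact congrArg Prod.snd h2
    have hdart : ∀ v, ∃ m, f^[m] p₀ = (v, σf v) := by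
      intro v
      obtain ⟨m, hm⟩ := hfind v
      refine ⟨m, ?_⟩
      have h2 : σf v = (f^[m] p₀).2 := by rw [← hm, hσfval]
      exact Prod.ext hm h2.symm
    have hσfadj : ∀ v, G.Adj v (σf v) := by
      intro v
      obtain ⟨m, hm⟩ := hdart v
      have h2 := hiter m p₀ hd₀
      rw [hm] at h2
      exact h2
    have hσfinj : Function.Injective σf := by
      intro v1 v2 h
      by_contra hne
      obtain ⟨i, hi⟩ := hdart v1
      obtain ⟨j, hj⟩ := hdart v2
      have hfst1 : (f^[i + 1] p₀).1 = σf v1 := by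
        rw [Function.iterate_succ_apply', hi]
      have hfst2 : (f^[j + 1] p₀).1 = σf v2 := by
        rw [Function.iterate_succ_apply', hj]
      have heq2 := huniq (i + 1) (j + 1) (by rw [hfst1, hfst2, h])
      have hsnd := congrArg Prod.snd heq2
      rw [Function.iterate_succ_apply', Function.iterate_succ_apply', hi, hj] at hsnd
      rw [← h] at hsnd
      have hadw1 : G.Adj (σf v1) v1 := (hσfadj v1).symm
      have hadw2 : G.Adj (σf v1) v2 := by rw [h]; exact (hσfadj v2).symm
      have e1 : v2 = other (σf v1) v1 :=
        (hother (σf v1) v1 hadw1).2.2 v2 hadw2 (fun hh => hne hh.symm)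
      have e2 : v1 = other (σf v1) v2 :=
        (hother (σf v1) v2 hadw2).2.2 v1 hadw1 hne
      exact hne (e1.trans (hsnd.trans e2.symm)).symm
    set σ : Perm (Fin n) := Equiv.ofBijective σf
      (Finite.injective_iff_bijective.mp hσfinj) with hσdef
    have hσapp : ∀ v, σ v = σf v := fun v => rfl
    have hσa : σ p₀.1 = p₀.2 := by rw [hσapp]; exact hσfval 0
    have hσfix : ∀ v, σ v ≠ v := by
      intro v h
      exact (hσfadj v).ne (by rw [← hσapp]; exact h.symm)
    have hpow : ∀ m, (σ ^ m) p₀.1 = (f^[m] p₀).1 := by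
      intro m
      induction m with
      | zero => rfl
      | succ m ih =>
        have h1 : (σ ^ (m + 1)) p₀.1 = σ ((σ ^ m) p₀.1) := by rw [pow_succ']; rfl
        rw [h1, ih, hσapp, hσfval m, Function.iterate_succ_apply']
    have hFC : FC σ := by
      constructor
      · exact hσfix
      · have hbase : ∀ v, σ.SameCycle p₀.1 v := by
          intro v
          obtain ⟨m, hm⟩ := hfind v
          exact ⟨(m : ℤ), by rw [zpow_natCast, hpow m, hm]⟩
        exact fun x y => (hbase x).symm.trans (hbase y)
    have hcharG : ∀ v w, G.Adj v w → σ v = w ∨ σ w = v := by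
      intro v w hvw
      by_cases h : w = σf v
      · exact Or.inl (by rw [hσapp, h])
      · obtain ⟨m, hm⟩ := hdart v
        have hpred : f (f^[m + T - 1] p₀) = f^[m] p₀ := by
          have h0 : f^[m + T - 1 + 1] p₀ = f^[m] p₀ := by
            have harith : m + T - 1 + 1 = m + T := by omega
            rw [harith]
            exact hperiod m
          rw [Function.iterate_succ_apply'] at h0
          exact h0
        have hp'adj : G.Adj (f^[m + T - 1] p₀).1 (f^[m + T - 1] p₀).2 :=
          hiter _ p₀ hd₀
        have hp2 : (f^[m + T - 1] p₀).2 = v := by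
          have h2 := congrArg Prod.fst hpred
          rw [hm] at h2
          exact h2
        have hoth : other v (f^[m + T - 1] p₀).1 = σf v := by
          have h2 : other (f^[m + T - 1] p₀).2 (f^[m + T - 1] p₀).1 = (f^[m] p₀).2 :=
            congrArg Prod.snd hpred
          rw [hp2, hm] at h2
          exact h2
        have hadj1 : G.Adj v (f^[m + T - 1] p₀).1 := by
          rw [← hp2]
          exact hp'adj.symm
        have hwp : w = (f^[m + T - 1] p₀).1 := by
          by_contra hwp
          have h2 := (hother v _ hadj1).2.2 w hvw hwp
          rw [hoth] at h2
          exact h h2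
        right
        rw [hσapp, hwp]
        have h2 := hσfval (m + T - 1)
        rw [hp2] at h2
        exact h2
    have hQ : ∀ p ∈ P, σ p.1 = p.2 ∨ σ p.2 = p.1 := by
      intro p hp
      obtain ⟨e, he, rfl⟩ := Finset.mem_image.mp hp
      apply hcharG
      have h := hM e he
      rw [← Quot.out_eq e] at h
      exact (SimpleGraph.mem_edgeSet _).mp h
    refine ⟨⟨σ, hFC, hσa, hQ⟩, ?_⟩
    refine Subtype.ext ?_
    show SimpleGraph.fromRel (fun x y => σ x = y) = G
    ext v w
    rw [hchar2 σ hFC]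
    constructor
    · rintro (h | h)
      · rw [← h, hσapp]; exact hσfadj v
      · rw [← h, hσapp]; exact (hσfadj w).symm
    · exact hcharG v w
end
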